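/- Existence of best rational approximants: Let [A,B] be a real segment with A < B, let f : [A,B] → ℝ be continuous, and let m, n be nonnegative integers. Then there exists a rational function R* of type (n,m) on [A,B] such that for every rational function R of type (n,m) on [A,B], sup_{x∈[A,B]} |f(x) − R*(x)| ≤ sup_{x∈[A,B]} |f(x) − R(x)|. -/

import Mathlib

open Polynomial Set Filter Topology

/-- A rational function of type (n,m) on [A,B]. -/
def IsRatFun (A B : ℝ) (n m : ℕ) (R : ℝ → ℝ) : Prop :=
  ∃ P Q : Polynomial ℝ, P.natDegree ≤ n ∧ Q.natDegree ≤ m ∧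
    (∀ x ∈ Set.Icc A B, Q.eval x ≠ 0) ∧
    ∀ x ∈ Set.Icc A B, R x = P.eval x / Q.eval x

noncomputable def evv (d : ℕ) (v : Fin (d+1) → ℝ) (x : ℝ) : ℝ := ∑ i, v i * x ^ (i : ℕ)

lemma evv_continuous (d : ℕ) : Continuous fun p : (Fin (d+1) → ℝ) × ℝ => evv d p.1 p.2 := by
  unfold evv
  exact continuous_finset_sum _ fun i _ =>
    ((continuous_apply i).comp continuous_fst).mul (continuous_snd.pow (i : ℕ))

lemma eval_eq_evv {d : ℕ} {P : Polynomial ℝ} (h : P.natDegree ≤ d) (x : ℝ) :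
    P.eval x = evv d (fun i => P.coeff i) x := by
  rw [evv, Polynomial.eval_eq_sum_range' (Nat.lt_succ_of_le h), ← Fin.sum_univ_eq_sum_range]

lemma evv_coeff_div {d : ℕ} {P : Polynomial ℝ} (h : P.natDegree ≤ d) (M x : ℝ) :
    evv d (fun i => P.coeff i / M) x = P.eval x / M := by
  rw [eval_eq_evv h, evv, evv, Finset.sum_div]
  simp [div_mul_eq_mul_div]

noncomputable def vpoly (d : ℕ) (v : Fin (d+1) → ℝ) : Polynomial ℝ :=
  ∑ i, Polynomial.C (v i) * Polynomial.X ^ (i : ℕ)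

lemma vpoly_natDegree_le (d : ℕ) (v : Fin (d+1) → ℝ) : (vpoly d v).natDegree ≤ d := by
  refine (Polynomial.natDegree_sum_le _ _).trans ?_
  rw [Finset.fold_max_le]
  exact ⟨Nat.zero_le _, fun i _ =>
    (Polynomial.natDegree_C_mul_le _ _).trans (by simpa using Nat.lt_succ_iff.mp i.isLt)⟩

lemma vpoly_eval (d : ℕ) (v : Fin (d+1) → ℝ) (x : ℝ) : (vpoly d v).eval x = evv d v x := by
  simp [vpoly, evv, Polynomial.eval_finset_sum]

/-- Coefficient bound from value bound on [A,B]. -/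
lemma coeff_bound (d : ℕ) {A B : ℝ} (hAB : A < B) :
    ∃ K : ℝ, 0 ≤ K ∧ ∀ (v : Fin (d+1) → ℝ) (c : ℝ),
      (∀ x ∈ Set.Icc A B, |evv d v x| ≤ c) → ∀ i, |v i| ≤ K * c := by
  set t : Fin (d+1) → ℝ := fun j => A + (B - A) * ((j : ℝ) / (d+1)) with ht
  have hd1 : (0:ℝ) < (d:ℝ) + 1 := by positivity
  have htinj : Function.Injective t := by
    intro a b hab
    simp only [ht] at hab
    have hab := mul_left_cancel₀ (sub_ne_zero.mpr hAB.ne') (add_left_cancel hab)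
    rw [div_left_inj' hd1.ne'] at hab
    exact Fin.ext (by exact_mod_cast hab)
  have htmem : ∀ j, t j ∈ Set.Icc A B := by
    intro j
    have h0 : (0:ℝ) ≤ (j:ℝ) / (d+1) := by positivity
    have hjd : ((j:ℕ):ℝ) ≤ d := Nat.cast_le.mpr (Nat.lt_succ_iff.mp j.isLt)
    have h1 : (j:ℝ) / (d+1) ≤ 1 := by
      rw [div_le_one hd1]; linarith
    constructor <;> simp only [ht] <;> nlinarith [sub_pos.mpr hAB]
  let T : (Fin (d+1) → ℝ) →ₗ[ℝ] (Fin (d+1) → ℝ) :=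
    { toFun := fun v j => evv d v (t j)
      map_add' := by intro u v; funext j; simp [evv, add_mul, Finset.sum_add_distrib]
      map_smul' := by intro a v; funext j; simp [evv, Finset.mul_sum, mul_assoc] }
  have hTinj : Function.Injective T := by
    rw [← LinearMap.ker_eq_bot, LinearMap.ker_eq_bot']
    intro v hv
    have hvp : (∑ i, Polynomial.C (v i) * Polynomial.X ^ (i : ℕ) : Polynomial ℝ) = 0 := by
      apply Polynomial.eq_zero_of_natDegree_lt_card_of_eval_eq_zero _ htinj
      · intro j
        have := congrFun hv j
        change evv d v (t j) = 0 at this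
        simpa [evv, Polynomial.eval_finset_sum] using this
      · refine lt_of_le_of_lt ?_ (by simp : d < Fintype.card (Fin (d+1)))
        refine (Polynomial.natDegree_sum_le _ _).trans ?_
        rw [Finset.fold_max_le]
        exact ⟨Nat.zero_le _, fun i _ =>
          (Polynomial.natDegree_C_mul_le _ _).trans (by simpa using Nat.lt_succ_iff.mp i.isLt)⟩
    funext i
    have := congrArg (fun p => Polynomial.coeff p i) hvp
    simp only [Polynomial.finset_sum_coeff, Polynomial.coeff_C_mul, Polynomial.coeff_X_pow,
      mul_ite, mul_one, mul_zero, Polynomial.coeff_zero] at this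
    rw [Finset.sum_eq_single i] at this
    · simpa using this
    · intro b _ hbi
      rw [if_neg]
      exact fun h => hbi (Fin.val_injective h.symm)
    · simp
  have hTsurj : Function.Surjective T := LinearMap.injective_iff_surjective.mp hTinj
  let e : (Fin (d+1) → ℝ) ≃ₗ[ℝ] (Fin (d+1) → ℝ) := LinearEquiv.ofBijective T ⟨hTinj, hTsurj⟩
  let L := LinearMap.toContinuousLinearMap (e.symm : (Fin (d+1) → ℝ) →ₗ[ℝ] (Fin (d+1) → ℝ))
  refine ⟨‖L‖, norm_nonneg _, fun v c hvc i => ?_⟩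
  have hc0 : 0 ≤ c := (abs_nonneg _).trans (hvc _ (htmem 0))
  have h1 : ‖T v‖ ≤ c := by
    rw [pi_norm_le_iff_of_nonneg hc0]
    intro j
    change ‖evv d v (t j)‖ ≤ c
    simpa using hvc _ (htmem j)
  have hev : e v = T v := rfl
  have h2 : e.symm (T v) = v := by rw [← hev]; exact e.symm_apply_apply v
  calc |v i| ≤ ‖v‖ := by simpa using norm_le_pi_norm v i
    _ = ‖L (T v)‖ := by simp [L, h2]
    _ ≤ ‖L‖ * ‖T v‖ := L.le_opNorm _
    _ ≤ ‖L‖ * c := by exact mul_le_mul_of_nonneg_left h1 (norm_nonneg _)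

lemma noroot_case {A B δ : ℝ} {f : ℝ → ℝ} {n m : ℕ} (P Q : Polynomial ℝ)
    (hPn : P.natDegree ≤ n) (hQm : Q.natDegree ≤ m)
    (hQ : ∀ x ∈ Set.Icc A B, Q.eval x ≠ 0)
    (h : ∀ x ∈ Set.Icc A B, |f x * Q.eval x - P.eval x| ≤ δ * |Q.eval x|) :
    ∃ P' Q' : Polynomial ℝ, P'.natDegree ≤ n ∧ Q'.natDegree ≤ m ∧
      (∀ x ∈ Set.Icc A B, Q'.eval x ≠ 0) ∧
      ∀ x ∈ Set.Icc A B, |f x - P'.eval x / Q'.eval x| ≤ δ := by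
  refine ⟨P, Q, hPn, hQm, hQ, fun x hx => ?_⟩
  have hq := hQ x hx
  have : f x - P.eval x / Q.eval x = (f x * Q.eval x - P.eval x) / Q.eval x := by
    field_simp
  rw [this, abs_div, div_le_iff₀ (abs_pos.mpr hq)]
  exact h x hx

lemma cancel {A B δ : ℝ} (hAB : A < B) {f : ℝ → ℝ} (hf : ContinuousOn f (Set.Icc A B))
    {n m : ℕ} :
    ∀ d : ℕ, ∀ Q : Polynomial ℝ, Q ≠ 0 → Q.natDegree ≤ d → Q.natDegree ≤ m →
    ∀ P : Polynomial ℝ, P.natDegree ≤ n →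
    (∀ x ∈ Set.Icc A B, |f x * Q.eval x - P.eval x| ≤ δ * |Q.eval x|) →
    ∃ P' Q' : Polynomial ℝ, P'.natDegree ≤ n ∧ Q'.natDegree ≤ m ∧
      (∀ x ∈ Set.Icc A B, Q'.eval x ≠ 0) ∧
      ∀ x ∈ Set.Icc A B, |f x - P'.eval x / Q'.eval x| ≤ δ := by
  intro d
  induction d with
  | zero =>
    intro Q hQne hQd _ P hPn h
    refine noroot_case P Q hPn ‹_› (fun x _ => ?_) h
    rw [Polynomial.eq_C_of_natDegree_eq_zero (Nat.le_zero.mp hQd)]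
    simpa using fun hc => hQne
      (by rw [Polynomial.eq_C_of_natDegree_eq_zero (Nat.le_zero.mp hQd), hc, map_zero])
  | succ d ih =>
    intro Q hQne hQd hQm P hPn h
    by_cases hroot : ∃ x0 ∈ Set.Icc A B, Q.eval x0 = 0
    · obtain ⟨x0, hx0, hQx0⟩ := hroot
      have hPx0 : P.eval x0 = 0 := by
        have := h x0 hx0
        rw [hQx0] at this
        simp only [mul_zero, zero_sub, abs_neg, abs_zero] at this
        exact abs_eq_zero.mp (le_antisymm this (abs_nonneg _))
      obtain ⟨Q₁, hQ₁⟩ : (Polynomial.X - Polynomial.C x0) ∣ Q :=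
        Polynomial.dvd_iff_isRoot.mpr hQx0
      obtain ⟨P₁, hP₁⟩ : (Polynomial.X - Polynomial.C x0) ∣ P :=
        Polynomial.dvd_iff_isRoot.mpr hPx0
      have hXne : (Polynomial.X - Polynomial.C x0 : Polynomial ℝ) ≠ 0 :=
        Polynomial.X_sub_C_ne_zero x0
      have hQ₁ne : Q₁ ≠ 0 := fun hz => hQne (by rw [hQ₁, hz, mul_zero])
      have hQdeg : Q.natDegree = Q₁.natDegree + 1 := by
        rw [hQ₁, Polynomial.natDegree_mul hXne hQ₁ne, Polynomial.natDegree_X_sub_C, add_comm]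
      have hQ₁d : Q₁.natDegree ≤ d := by omega
      have hQ₁m : Q₁.natDegree ≤ m := by omega
      have hP₁n : P₁.natDegree ≤ n := by
        by_cases hP₁z : P₁ = 0
        · simp [hP₁z]
        · have : P.natDegree = P₁.natDegree + 1 := by
            rw [hP₁, Polynomial.natDegree_mul hXne hP₁z, Polynomial.natDegree_X_sub_C, add_comm]
          omega
      have key : ∀ x ∈ Set.Icc A B,
          |f x * Q₁.eval x - P₁.eval x| ≤ δ * |Q₁.eval x| := by
        have off : ∀ x ∈ Set.Icc A B, x ≠ x0 →
            |f x * Q₁.eval x - P₁.eval x| ≤ δ * |Q₁.eval x| := by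
          intro x hx hxne
          have hd := h x hx
          rw [hQ₁, hP₁] at hd
          simp only [Polynomial.eval_mul, Polynomial.eval_sub, Polynomial.eval_X,
            Polynomial.eval_C] at hd
          have hfac : f x * ((x - x0) * Q₁.eval x) - (x - x0) * P₁.eval x
              = (x - x0) * (f x * Q₁.eval x - P₁.eval x) := by ring
          rw [hfac, abs_mul, abs_mul] at hd
          have hpos : 0 < |x - x0| := abs_pos.mpr (sub_ne_zero.mpr hxne)
          calc |f x * Q₁.eval x - P₁.eval x|
              = |x - x0| * |f x * Q₁.eval x - P₁.eval x| / |x - x0| := by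
                field_simp
            _ ≤ δ * (|x - x0| * |Q₁.eval x|) / |x - x0| := by
                gcongr
            _ = δ * |Q₁.eval x| := by field_simp
        intro x hx
        by_cases hxne : x = x0
        · subst hxne
          set g : ℝ → ℝ := fun y => |f y * Q₁.eval y - P₁.eval y| - δ * |Q₁.eval y| with hg
          have hgc : ContinuousOn g (Set.Icc A B) := by
            apply ContinuousOn.sub
            · exact ((hf.mul (Polynomial.continuous Q₁).continuousOn).sub
                (Polynomial.continuous P₁).continuousOn).abs
            · exact (continuous_const.mul (Polynomial.continuous Q₁).abs).continuousOn
          have hcl : x ∈ closure (Set.Icc A B \ {x}) := by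
            rcases lt_or_eq_of_le hx.2 with hxB | hxB
            · have hsub : Set.Ioc x B ⊆ Set.Icc A B \ {x} := by
                intro y hy
                exact ⟨⟨hx.1.trans hy.1.le, hy.2⟩, ne_of_gt hy.1⟩
              refine closure_mono hsub ?_
              rw [closure_Ioc (ne_of_lt hxB)]
              exact ⟨le_refl x, hxB.le⟩
            · have hAx : A < x := by rw [← hxB] at hAB; exact hAB
              have hsub : Set.Ico A x ⊆ Set.Icc A B \ {x} := by
                intro y hy
                exact ⟨⟨hy.1, hy.2.le.trans hx.2⟩, ne_of_lt hy.2⟩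
              refine closure_mono hsub ?_
              rw [closure_Ico (ne_of_lt hAx)]
              exact ⟨hAx.le, le_refl x⟩
          have hnb : (𝓝[Set.Icc A B \ {x}] x).NeBot :=
            mem_closure_iff_nhdsWithin_neBot.mp hcl
          have htend : Filter.Tendsto g (𝓝[Set.Icc A B \ {x}] x) (𝓝 (g x)) :=
            (hgc x hx).mono diff_subset
          have hle : g x ≤ 0 := by
            refine le_of_tendsto htend ?_
            filter_upwards [eventually_mem_nhdsWithin] with y hy
            have := off y hy.1 hy.2
            simp only [hg]
            linarith
          simp only [hg] at hle
          linarith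
        · exact off x hx hxne
      exact ih Q₁ hQ₁ne hQ₁d hQ₁m P₁ hP₁n key
    · push_neg at hroot
      exact noroot_case P Q hPn hQm hroot h

lemma ratfun_bddAbove {A B : ℝ} {f R : ℝ → ℝ} {n m : ℕ}
    (hf : ContinuousOn f (Set.Icc A B)) (hR : IsRatFun A B n m R) :
    BddAbove (Set.range fun y : Set.Icc A B => |f y.1 - R y.1|) := by
  obtain ⟨P, Q, _, _, hQ0, hReq⟩ := hR
  have heq : (fun y : Set.Icc A B => |f y.1 - R y.1|)
      = fun y : Set.Icc A B => |f y.1 - P.eval y.1 / Q.eval y.1| := by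
    funext y; rw [hReq y.1 y.2]
  have h2 : (Set.range fun y : Set.Icc A B => |f y.1 - P.eval y.1 / Q.eval y.1|)
      = (fun x => |f x - P.eval x / Q.eval x|) '' Set.Icc A B :=
    (Set.image_eq_range (fun x => |f x - P.eval x / Q.eval x|) (Set.Icc A B)).symm
  rw [heq, h2]
  apply IsCompact.bddAbove_image isCompact_Icc
  exact (hf.sub ((Polynomial.continuous P).continuousOn.div
    (Polynomial.continuous Q).continuousOn hQ0)).abs

lemma pointwise_le_iSup {A B : ℝ} {f R : ℝ → ℝ} {n m : ℕ}
    (hf : ContinuousOn f (Set.Icc A B)) (hR : IsRatFun A B n m R)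
    {x : ℝ} (hx : x ∈ Set.Icc A B) :
    |f x - R x| ≤ ⨆ y : Set.Icc A B, |f y.1 - R y.1| :=
  le_ciSup (ratfun_bddAbove hf hR) (⟨x, hx⟩ : Set.Icc A B)


lemma evv_tendsto2 {d : ℕ} {w : ℕ → Fin (d+1) → ℝ} {y : ℕ → ℝ} {a : Fin (d+1) → ℝ} {b : ℝ}
    (hw : Filter.Tendsto w atTop (𝓝 a)) (hy : Filter.Tendsto y atTop (𝓝 b)) :
    Filter.Tendsto (fun j => evv d (w j) (y j)) atTop (𝓝 (evv d a b)) := by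
  unfold evv
  exact tendsto_finset_sum _ fun i _ =>
    (((continuous_apply i).tendsto a).comp hw).mul (hy.pow (i : ℕ))

lemma evv_tendsto {d : ℕ} {w : ℕ → Fin (d+1) → ℝ} {a : Fin (d+1) → ℝ}
    (hw : Filter.Tendsto w atTop (𝓝 a)) (x : ℝ) :
    Filter.Tendsto (fun j => evv d (w j) x) atTop (𝓝 (evv d a x)) :=
  evv_tendsto2 hw tendsto_const_nhds

/-- From a minimizing sequence, extract a limit pair of coefficient vectors. -/
lemma exists_limit_pair {A B δ : ℝ} (hAB : A < B) {f : ℝ → ℝ}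
    {n m : ℕ} {c : ℝ}
    (v : ℕ → Fin (n+1) → ℝ) (w : ℕ → Fin (m+1) → ℝ) (xk : ℕ → ℝ)
    (hxkmem : ∀ k, xk k ∈ Set.Icc A B)
    (hwle : ∀ k, ∀ x ∈ Set.Icc A B, |evv m (w k) x| ≤ 1)
    (hweq : ∀ k, |evv m (w k) (xk k)| = 1)
    (hvle : ∀ k, ∀ x ∈ Set.Icc A B, |evv n (v k) x| ≤ c)
    (hkey : ∀ k, ∀ x ∈ Set.Icc A B,
      |f x * evv m (w k) x - evv n (v k) x| ≤ (δ + 1/((k:ℝ)+1)) * |evv m (w k) x|) :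
    ∃ (p : Fin (n+1) → ℝ) (q : Fin (m+1) → ℝ) (xs : ℝ), xs ∈ Set.Icc A B ∧
      |evv m q xs| = 1 ∧
      ∀ x ∈ Set.Icc A B, |f x * evv m q x - evv n p x| ≤ δ * |evv m q x| := by
  obtain ⟨Kn, hKn0, hKn⟩ := coeff_bound n hAB
  obtain ⟨Km, hKm0, hKm⟩ := coeff_bound m hAB
  have hc0 : 0 ≤ c := (abs_nonneg _).trans (hvle 0 A ⟨le_refl A, hAB.le⟩)
  have hvb : ∀ k i, |v k i| ≤ Kn * c := fun k => hKn (v k) _ (hvle k)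
  have hwb : ∀ k i, |w k i| ≤ Km * 1 := fun k => hKm (w k) 1 (hwle k)
  set u : ℕ → (Fin (n+1) → ℝ) × (Fin (m+1) → ℝ) × ℝ := fun k => (v k, w k, xk k) with hu
  set r : ℝ := max (Kn * c) (max (Km * 1) (max |A| |B|)) with hr
  have humem : ∀ k, u k ∈ Metric.closedBall (0 : (Fin (n+1) → ℝ) × (Fin (m+1) → ℝ) × ℝ) r := by
    intro k
    rw [Metric.mem_closedBall, dist_zero_right, Prod.norm_def, Prod.norm_def]
    have hvn : ‖v k‖ ≤ Kn * c := by
      rw [pi_norm_le_iff_of_nonneg (by positivity)]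
      intro i
      simpa [Real.norm_eq_abs] using hvb k i
    have hwn : ‖w k‖ ≤ Km * 1 := by
      rw [pi_norm_le_iff_of_nonneg (by positivity)]
      intro i
      simpa [Real.norm_eq_abs] using hwb k i
    have hxn : ‖xk k‖ ≤ max |A| |B| := by
      rw [Real.norm_eq_abs, abs_le]
      obtain ⟨h1, h2⟩ := hxkmem k
      constructor
      · calc -(max |A| |B|) ≤ -|A| := by simp [le_max_left]
          _ ≤ A := neg_abs_le A
          _ ≤ xk k := h1
      · calc xk k ≤ B := h2
          _ ≤ |B| := le_abs_self B
          _ ≤ max |A| |B| := le_max_right _ _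
    exact max_le (le_max_left _ _ |>.trans' hvn)
      (le_max_right _ _ |>.trans' (max_le (le_max_left _ _ |>.trans' hwn)
        (le_max_right _ _ |>.trans' hxn)))
  obtain ⟨l, _, φ, hφ, hconv⟩ :=
    (isCompact_closedBall (0 : (Fin (n+1) → ℝ) × (Fin (m+1) → ℝ) × ℝ) r).tendsto_subseq humem
  have hvconv : Filter.Tendsto (fun j => v (φ j)) atTop (𝓝 l.1) :=
    (continuous_fst.tendsto l).comp hconv
  have hwconv : Filter.Tendsto (fun j => w (φ j)) atTop (𝓝 l.2.1) :=
    ((continuous_fst.comp continuous_snd).tendsto l).comp hconv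
  have hxconv : Filter.Tendsto (fun j => xk (φ j)) atTop (𝓝 l.2.2) :=
    ((continuous_snd.comp continuous_snd).tendsto l).comp hconv
  refine ⟨l.1, l.2.1, l.2.2, ?_, ?_, ?_⟩
  · exact isClosed_Icc.mem_of_tendsto hxconv (Filter.Eventually.of_forall fun j => hxkmem (φ j))
  · have h1 : Filter.Tendsto (fun j => |evv m (w (φ j)) (xk (φ j))|) atTop
        (𝓝 |evv m l.2.1 l.2.2|) :=
      (evv_tendsto2 hwconv hxconv).abs
    have h2 : (fun j => |evv m (w (φ j)) (xk (φ j))|) = fun _ => (1:ℝ) :=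
      funext fun j => hweq (φ j)
    rw [h2] at h1
    exact tendsto_nhds_unique h1 tendsto_const_nhds
  · intro x hx
    have hεtend : Filter.Tendsto (fun j => 1/((φ j : ℝ)+1)) atTop (𝓝 0) :=
      tendsto_one_div_add_atTop_nhds_zero_nat.comp hφ.tendsto_atTop
    have hwx : Filter.Tendsto (fun j => evv m (w (φ j)) x) atTop (𝓝 (evv m l.2.1 x)) :=
      evv_tendsto hwconv x
    have hvx : Filter.Tendsto (fun j => evv n (v (φ j)) x) atTop (𝓝 (evv n l.1 x)) :=
      evv_tendsto hvconv x
    have hL : Filter.Tendsto (fun j => |f x * evv m (w (φ j)) x - evv n (v (φ j)) x|) atTop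
        (𝓝 |f x * evv m l.2.1 x - evv n l.1 x|) :=
      ((tendsto_const_nhds.mul hwx).sub hvx).abs
    have ha : Filter.Tendsto (fun j => δ + 1/((φ j:ℝ)+1)) atTop (𝓝 δ) := by
      simpa using tendsto_const_nhds.add hεtend
    have hRt : Filter.Tendsto (fun j => (δ + 1/((φ j:ℝ)+1)) * |evv m (w (φ j)) x|) atTop
        (𝓝 (δ * |evv m l.2.1 x|)) := ha.mul hwx.abs
    exact le_of_tendsto_of_tendsto' hL hRt fun j => hkey (φ j) x hx

set_option maxHeartbeats 1000000 in
/-- Existence of best rational approximants of type (n,m). -/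
theorem exists_best_rational_approximant
    (A B : ℝ) (hAB : A < B) (f : ℝ → ℝ) (hf : ContinuousOn f (Set.Icc A B))
    (m n : ℕ) :
    ∃ Rstar : ℝ → ℝ, IsRatFun A B n m Rstar ∧
      ∀ R : ℝ → ℝ, IsRatFun A B n m R →
        (⨆ y : Set.Icc A B, |f y.1 - Rstar y.1|) ≤ ⨆ y : Set.Icc A B, |f y.1 - R y.1| := by
  classical
  have hABle : A ≤ B := hAB.le
  have hAmem : A ∈ Set.Icc A B := ⟨le_refl A, hABle⟩
  haveI : Nonempty (Set.Icc A B) := ⟨⟨A, hAmem⟩⟩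
  set S : Set ℝ := {e | ∃ R, IsRatFun A B n m R ∧ e = ⨆ y : Set.Icc A B, |f y.1 - R y.1|}
    with hS
  have hzeroRat : IsRatFun A B n m (fun _ => 0) :=
    ⟨0, 1, by simp, by simp, fun x _ => by simp, fun x _ => by simp⟩
  have hSne : S.Nonempty := ⟨_, ⟨_, hzeroRat, rfl⟩⟩
  have hSlb : ∀ e ∈ S, (0:ℝ) ≤ e := by
    rintro e ⟨R, hR, rfl⟩
    exact Real.iSup_nonneg fun y => abs_nonneg _
  have hSbdd : BddBelow S := ⟨0, hSlb⟩
  set δ : ℝ := sInf S with hδ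
  have hmin : ∀ k : ℕ, ∃ R, IsRatFun A B n m R ∧
      (⨆ y : Set.Icc A B, |f y.1 - R y.1|) < δ + 1/((k:ℝ)+1) := by
    intro k
    have hpos : (0:ℝ) < 1/((k:ℝ)+1) := by positivity
    obtain ⟨e, heS, helt⟩ := exists_lt_of_csInf_lt hSne (by linarith : sInf S < δ + 1/((k:ℝ)+1))
    obtain ⟨R, hR, rfl⟩ := heS
    exact ⟨R, hR, helt⟩
  choose R hR hER using hmin
  choose P Q hPdeg hQdeg hQ0 hReq using fun k => hR k
  have hQcont : ∀ k, ContinuousOn (fun x => |(Q k).eval x|) (Set.Icc A B) := fun k =>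
    ((Polynomial.continuous (Q k)).abs).continuousOn
  choose xk hxkmem hxkmax using fun k =>
    isCompact_Icc.exists_isMaxOn (Set.nonempty_Icc.mpr hABle) (hQcont k)
  set M : ℕ → ℝ := fun k => |(Q k).eval (xk k)| with hM
  have hMpos : ∀ k, 0 < M k := fun k => abs_pos.mpr (hQ0 k _ (hxkmem k))
  set v : ℕ → Fin (n+1) → ℝ := fun k i => (P k).coeff i / M k with hv
  set w : ℕ → Fin (m+1) → ℝ := fun k i => (Q k).coeff i / M k with hw
  have hevv : ∀ k x, evv n (v k) x = (P k).eval x / M k := fun k x =>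
    evv_coeff_div (hPdeg k) (M k) x
  have hevw : ∀ k x, evv m (w k) x = (Q k).eval x / M k := fun k x =>
    evv_coeff_div (hQdeg k) (M k) x
  obtain ⟨Cf, hCf⟩ : ∃ C, ∀ x ∈ Set.Icc A B, |f x| ≤ C := by
    obtain ⟨C, hC⟩ := isCompact_Icc.bddAbove_image hf.abs
    exact ⟨C, fun x hx => hC (Set.mem_image_of_mem _ hx)⟩
  have hδ0 : 0 ≤ δ := le_csInf hSne hSlb
  have hfR : ∀ k, ∀ x ∈ Set.Icc A B, |f x - R k x| ≤ δ + 1/((k:ℝ)+1) := fun k x hx =>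
    (pointwise_le_iSup hf (hR k) hx).trans (hER k).le
  have hwle : ∀ k, ∀ x ∈ Set.Icc A B, |evv m (w k) x| ≤ 1 := by
    intro k x hx
    rw [hevw, abs_div, abs_of_pos (hMpos k), div_le_one (hMpos k)]
    exact hxkmax k hx
  have hweq : ∀ k, |evv m (w k) (xk k)| = 1 := by
    intro k
    rw [hevw, abs_div, abs_of_pos (hMpos k), div_self (hMpos k).ne']
  have hvle : ∀ k, ∀ x ∈ Set.Icc A B, |evv n (v k) x| ≤ Cf + δ + 1 := by
    intro k x hx
    have hq : (Q k).eval x ≠ 0 := hQ0 k x hx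
    have hRx : R k x = (P k).eval x / (Q k).eval x := hReq k x hx
    have hp : (P k).eval x = R k x * (Q k).eval x := by
      rw [hRx]; field_simp
    rw [hevv, hp, abs_div, abs_mul]
    have h1 : |(Q k).eval x| / M k ≤ 1 := by
      rw [div_le_one (hMpos k)]; exact hxkmax k hx
    have h2 : |R k x| ≤ Cf + δ + 1 := by
      have ha := hfR k x hx
      have hfx := hCf x hx
      have hek : 1/((k:ℝ)+1) ≤ 1 := by
        rw [div_le_one (by positivity)]
        simp
      have hc1 : |R k x| - |f x| ≤ |R k x - f x| := abs_sub_abs_le_abs_sub _ _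
      have hc2 : |R k x - f x| = |f x - R k x| := abs_sub_comm _ _
      linarith
    rw [abs_of_pos (hMpos k)]
    have hq0 : (0:ℝ) ≤ |(Q k).eval x| / M k := by positivity
    calc |R k x| * |(Q k).eval x| / M k = |R k x| * (|(Q k).eval x| / M k) := by ring
      _ ≤ (Cf + δ + 1) * 1 := by
          have hR0 : (0:ℝ) ≤ |R k x| := abs_nonneg _
          exact mul_le_mul h2 h1 hq0 (by linarith)
      _ = Cf + δ + 1 := mul_one _
  have hkey : ∀ k, ∀ x ∈ Set.Icc A B,
      |f x * evv m (w k) x - evv n (v k) x| ≤ (δ + 1/((k:ℝ)+1)) * |evv m (w k) x| := by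
    intro k x hx
    have hq : (Q k).eval x ≠ 0 := hQ0 k x hx
    have hRx : R k x = (P k).eval x / (Q k).eval x := hReq k x hx
    rw [hevv, hevw]
    have hMne := (hMpos k).ne'
    have hfac : f x * ((Q k).eval x / M k) - (P k).eval x / M k
        = (f x - R k x) * (Q k).eval x / M k := by
      rw [hRx]; field_simp
    rw [hfac, abs_div, abs_mul, abs_of_pos (hMpos k), abs_div, abs_of_pos (hMpos k),
      ← mul_div_assoc]
    gcongr
    exact hfR k x hx
  obtain ⟨p, q, xs, hxsmem, hq1, hlim⟩ :=
    exists_limit_pair hAB v w xk hxkmem hwle hweq hvle hkey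
  set QQ : Polynomial ℝ := vpoly m q with hQQ
  set PP : Polynomial ℝ := vpoly n p with hPP
  have hQQne : QQ ≠ 0 := by
    intro hz
    have h0 : evv m q xs = 0 := by rw [← vpoly_eval, ← hQQ, hz]; simp
    rw [h0] at hq1
    simp at hq1
  have hineq : ∀ x ∈ Set.Icc A B, |f x * QQ.eval x - PP.eval x| ≤ δ * |QQ.eval x| := by
    intro x hx
    rw [hQQ, hPP, vpoly_eval, vpoly_eval]
    exact hlim x hx
  obtain ⟨P', Q', hP'n, hQ'm, hQ'0, hfin⟩ :=
    cancel hAB hf m QQ hQQne (vpoly_natDegree_le m q) (vpoly_natDegree_le m q)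
      PP (vpoly_natDegree_le n p) hineq
  refine ⟨fun x => P'.eval x / Q'.eval x, ⟨P', Q', hP'n, hQ'm, hQ'0, fun x _ => rfl⟩, ?_⟩
  intro Rg hRg
  have h1 : (⨆ y : Set.Icc A B, |f y.1 - P'.eval y.1 / Q'.eval y.1|) ≤ δ :=
    ciSup_le fun y => hfin y.1 y.2
  have h2 : δ ≤ ⨆ y : Set.Icc A B, |f y.1 - Rg y.1| :=
    csInf_le hSbdd ⟨Rg, hRg, rfl⟩
  exact h1.trans h2
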